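/- If n ≥ 2, α₁ = α₂, and w̄ is a local minimizer of g(w) = (1/2)((1/2)‖w‖² − ν)² + (1/2)wᵀDw − ψᵀw, then w̄ is a global minimizer. -/

import Mathlib

open Finset

lemma aux_deriv (φ : ℝ → ℝ) (b c2 c3 c4 : ℝ)
    (hφ : ∀ t, φ t = φ 0 + b*t + c2*t^2 + c3*t^3 + c4*t^4)
    (h : IsLocalMin φ 0) : b = 0 := by
  have H : HasDerivAt (fun t : ℝ => φ 0 + b*t + c2*t^2 + c3*t^3 + c4*t^4)
      (((b*1 + c2*(2*(0:ℝ)^1)) + c3*(3*(0:ℝ)^2)) + c4*(4*(0:ℝ)^3)) 0 := by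
    exact ((((((hasDerivAt_id (0:ℝ)).const_mul b).const_add (φ 0)).add
      ((hasDerivAt_pow 2 (0:ℝ)).const_mul c2)).add
      ((hasDerivAt_pow 3 (0:ℝ)).const_mul c3)).add
      ((hasDerivAt_pow 4 (0:ℝ)).const_mul c4))
  have H2 : HasDerivAt φ b 0 := by
    have heq : φ = (fun t : ℝ => φ 0 + b*t + c2*t^2 + c3*t^3 + c4*t^4) := funext hφ
    rw [heq]
    convert H using 1
    norm_num
  exact h.hasDerivAt_eq_zero H2

lemma aux_quartic (φ : ℝ → ℝ) (c d : ℝ)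
    (hφ : ∀ t, φ t = φ 0 + c*t^2 + d*t^4)
    (h : IsLocalMin φ 0) : 0 ≤ c := by
  by_contra hc
  push_neg at hc
  obtain ⟨ε, hε, hball⟩ := Metric.eventually_nhds_iff.mp h
  set M := max d 1 with hM
  have hM0 : (0:ℝ) < M := lt_of_lt_of_le one_pos (le_max_right _ _)
  have hcM : 0 < -c/(2*M) := div_pos (by linarith) (by positivity)
  set t := min (ε/2) (Real.sqrt (-c/(2*M))) with ht
  have ht0 : 0 < t := lt_min (by linarith) (Real.sqrt_pos.mpr hcM)
  have ht2 : t^2 ≤ -c/(2*M) := by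
    have h1 : t ≤ Real.sqrt (-c/(2*M)) := min_le_right _ _
    have h2 : t^2 ≤ (Real.sqrt (-c/(2*M)))^2 := by nlinarith [Real.sqrt_nonneg (-c/(2*M))]
    rwa [Real.sq_sqrt hcM.le] at h2
  have hdist : dist t 0 < ε := by
    rw [Real.dist_eq, sub_zero, abs_of_pos ht0]
    calc t ≤ ε/2 := min_le_left _ _
    _ < ε := by linarith
  have hle := hball hdist
  rw [hφ t] at hle
  have hd4 : d*t^4 ≤ M*t^4 := mul_le_mul_of_nonneg_right (le_max_left d 1) (by positivity)
  have key : M * t^4 ≤ (-c/2) * t^2 := by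
    calc M * t^4 = (M * t^2) * t^2 := by ring
    _ ≤ (M * t^2) * (-c/(2*M)) := mul_le_mul_of_nonneg_left ht2 (by positivity)
    _ = (-c/2) * t^2 := by field_simp
  nlinarith [sq_nonneg t, mul_pos ht0 ht0]

lemma sum_one {n : ℕ} (i : Fin n) (f : Fin n → ℝ) :
    ∑ j, f j * (if j = i then (1:ℝ) else 0) = f i := by
  simp [mul_ite, mul_one, mul_zero, Finset.sum_ite_eq']

lemma sum_two {n : ℕ} (i0 i1 : Fin n) (hne : i0 ≠ i1) (a b : ℝ) (f : Fin n → ℝ) :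
    ∑ j, f j * (if j = i0 then a else if j = i1 then b else 0) = f i0 * a + f i1 * b := by
  have h : ∀ j ∈ univ, f j * (if j = i0 then a else if j = i1 then b else 0)
      = (f j * a) * (if j = i0 then (1:ℝ) else 0) + (f j * b) * (if j = i1 then (1:ℝ) else 0) := by
    intro j _
    by_cases h0 : j = i0
    · subst h0; simp [hne]
    · by_cases h1 : j = i1 <;> simp [h0, h1, hne.symm]
  rw [Finset.sum_congr rfl h, Finset.sum_add_distrib, sum_one i0 (fun j => f j * a),
    sum_one i1 (fun j => f j * b)]

lemma expand {n : ℕ} (α ψ : Fin n → ℝ) (ν : ℝ) (w u : Fin n → ℝ) (t : ℝ) :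
    (1/2) * ((1/2) * ∑ i, (w i + t * u i)^2 - ν)^2
      + (1/2) * ∑ i, α i * (w i + t * u i)^2 - ∑ i, ψ i * (w i + t * u i)
    = (1/2) * ((1/2) * (∑ i, (w i)^2) + t * (∑ i, w i * u i)
        + (1/2) * t^2 * (∑ i, (u i)^2) - ν)^2
      + (1/2) * (∑ i, α i * (w i)^2) + t * (∑ i, α i * (w i * u i))
      + (1/2) * t^2 * (∑ i, α i * (u i)^2)
      - (∑ i, ψ i * w i) - t * (∑ i, ψ i * u i) := by
  have e1 : ∑ i, (w i + t * u i)^2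
      = (∑ i, (w i)^2) + (2*t) * (∑ i, w i * u i) + t^2 * (∑ i, (u i)^2) := by
    rw [Finset.mul_sum, Finset.mul_sum, ← Finset.sum_add_distrib, ← Finset.sum_add_distrib]
    exact Finset.sum_congr rfl fun i _ => by ring
  have e2 : ∑ i, α i * (w i + t * u i)^2
      = (∑ i, α i * (w i)^2) + (2*t) * (∑ i, α i * (w i * u i))
        + t^2 * (∑ i, α i * (u i)^2) := by
    rw [Finset.mul_sum, Finset.mul_sum, ← Finset.sum_add_distrib, ← Finset.sum_add_distrib]
    exact Finset.sum_congr rfl fun i _ => by ring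
  have e3 : ∑ i, ψ i * (w i + t * u i)
      = (∑ i, ψ i * w i) + t * (∑ i, ψ i * u i) := by
    rw [Finset.mul_sum, ← Finset.sum_add_distrib]
    exact Finset.sum_congr rfl fun i _ => by ring
  rw [e1, e2, e3]; ring

lemma sum_lin {n : ℕ} (L : ℝ) (f c : Fin n → ℝ) :
    ∑ i, (L * f i + c i) = L * (∑ i, f i) + ∑ i, c i := by
  rw [Finset.sum_add_distrib, Finset.mul_sum]

lemma sum_quad {n : ℕ} (L : ℝ) (α w v : Fin n → ℝ) :
    ∑ i, (L + α i) * (v i - w i)^2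
      = L * (∑ i, (v i)^2) + (∑ i, α i * (v i)^2) + L * (∑ i, (w i)^2)
        + (∑ i, α i * (w i)^2) - (2*L) * (∑ i, w i * v i)
        - 2 * (∑ i, α i * (w i * v i)) := by
  rw [Finset.mul_sum, Finset.mul_sum, Finset.mul_sum, Finset.mul_sum,
    ← Finset.sum_add_distrib, ← Finset.sum_add_distrib, ← Finset.sum_add_distrib,
    ← Finset.sum_sub_distrib, ← Finset.sum_sub_distrib]
  exact Finset.sum_congr rfl fun i _ => by ring

lemma final_ineq (ν S1 S2 A B C P Q : ℝ)
    (hQ : Q = ((1/2)*S1 - ν) * S2 + B + ((1/2)*S1 - ν) * S1 + A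
      - (2*((1/2)*S1 - ν)) * P - 2*C)
    (hQnn : 0 ≤ Q) :
    (1/2)*((1/2)*S1 - ν)^2 + (1/2)*A - (((1/2)*S1 - ν)*S1 + A)
      ≤ (1/2)*((1/2)*S2 - ν)^2 + (1/2)*B - (((1/2)*S1 - ν)*P + C) := by
  have key : ((1/2)*((1/2)*S2 - ν)^2 + (1/2)*B - (((1/2)*S1 - ν)*P + C))
      - ((1/2)*((1/2)*S1 - ν)^2 + (1/2)*A - (((1/2)*S1 - ν)*S1 + A))
      = (1/2)*Q + (1/8)*(S2-S1)^2 := by rw [hQ]; ring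
  nlinarith [sq_nonneg (S2 - S1)]

theorem stmt6 {n : ℕ} (hn : 2 ≤ n) (α ψ : Fin n → ℝ) (hα : Monotone α) (ν : ℝ)
    (h12 : α ⟨0, by omega⟩ = α ⟨1, hn⟩)
    (g : (Fin n → ℝ) → ℝ)
    (hg : ∀ w, g w = (1/2) * ((1/2) * ∑ i, (w i)^2 - ν)^2
        + (1/2) * ∑ i, α i * (w i)^2 - ∑ i, ψ i * w i)
    (w : Fin n → ℝ) (hmin : IsLocalMin g w) :
    ∀ v : Fin n → ℝ, g w ≤ g v := by
  have hline : ∀ u : Fin n → ℝ, IsLocalMin (fun t : ℝ => g (w + t • u)) 0 := by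
    intro u
    have hcont : Continuous (fun t : ℝ => w + t • u) := by continuity
    have htend : Filter.Tendsto (fun t : ℝ => w + t • u) (nhds 0) (nhds w) := by
      have := hcont.tendsto 0
      simpa using this
    have h0 : g (w + (0:ℝ) • u) = g w := by norm_num
    have hev : ∀ᶠ t in nhds (0:ℝ), g w ≤ g (w + t • u) := htend.eventually hmin
    exact hev.mono fun t ht => le_trans (le_of_eq h0) ht
  have hgen : ∀ u : Fin n → ℝ, ∀ t : ℝ, g (w + t • u)
      = (1/2) * ((1/2) * (∑ i, (w i)^2) + t * (∑ i, w i * u i)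
        + (1/2) * t^2 * (∑ i, (u i)^2) - ν)^2
      + (1/2) * (∑ i, α i * (w i)^2) + t * (∑ i, α i * (w i * u i))
      + (1/2) * t^2 * (∑ i, α i * (u i)^2)
      - (∑ i, ψ i * w i) - t * (∑ i, ψ i * u i) := by
    intro u t
    rw [hg]
    simp only [Pi.add_apply, Pi.smul_apply, smul_eq_mul]
    exact expand α ψ ν w u t
  -- first order conditions
  have hstat : ∀ i : Fin n, ψ i = ((1/2) * ∑ j, (w j)^2 - ν + α i) * w i := by
    intro i
    set u : Fin n → ℝ := fun j => if j = i then (1:ℝ) else 0 with hu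
    have s1 : ∑ j, w j * u j = w i := sum_one i w
    have s2 : ∑ j, (u j)^2 = 1 := by
      have h : ∀ j ∈ univ, (u j)^2 = u j * u j := fun j _ => sq (u j)
      rw [Finset.sum_congr rfl h, sum_one i u]
      simp [hu]
    have s3 : ∑ j, α j * (w j * u j) = α i * w i := by
      have h : ∀ j ∈ univ, α j * (w j * u j) = (α j * w j) * u j := fun j _ => by ring
      rw [Finset.sum_congr rfl h, sum_one i (fun j => α j * w j)]
    have s5 : ∑ j, α j * (u j)^2 = α i := by
      have h : ∀ j ∈ univ, α j * (u j)^2 = (α j * u j) * u j := fun j _ => by ring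
      rw [Finset.sum_congr rfl h, sum_one i (fun j => α j * u j)]
      simp [hu]
    have s4 : ∑ j, ψ j * u j = ψ i := sum_one i ψ
    have hφ : ∀ t : ℝ, g (w + t • u)
        = (1/2) * ((1/2) * (∑ j, (w j)^2) + t * w i + (1/2) * t^2 - ν)^2
          + (1/2) * (∑ j, α j * (w j)^2) + t * (α i * w i) + (1/2) * t^2 * α i
          - (∑ j, ψ j * w j) - t * ψ i := by
      intro t
      rw [hgen u t, s1, s2, s3, s4, s5]
      ring
    have hb := aux_deriv (fun t : ℝ => g (w + t • u))
      (((1/2) * ∑ j, (w j)^2 - ν) * w i + α i * w i - ψ i)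
      ((1/2) * ((1/2) * ∑ j, (w j)^2 - ν) + (1/2) * (w i)^2 + (1/2) * α i)
      ((1/2) * w i) (1/8)
      (by intro t; rw [hφ t, hφ 0]; ring)
      (hline u)
    linarith [hb]
  -- second order condition
  have hne : (⟨0, by omega⟩ : Fin n) ≠ (⟨1, hn⟩ : Fin n) := by
    simp [Fin.ext_iff]
  obtain ⟨a, b, hperp, hU⟩ : ∃ a b : ℝ, a * w ⟨0, by omega⟩ + b * w ⟨1, hn⟩ = 0
      ∧ 0 < a^2 + b^2 := by
    by_cases h0 : w ⟨0, by omega⟩ = 0 ∧ w ⟨1, hn⟩ = 0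
    · exact ⟨1, 0, by simp [h0.1], by norm_num⟩
    · refine ⟨w ⟨1, hn⟩, -(w ⟨0, by omega⟩), by ring, ?_⟩
      rcases not_and_or.mp h0 with h | h
      · nlinarith [sq_nonneg (w ⟨1, hn⟩), mul_self_pos.mpr h]
      · nlinarith [sq_nonneg (w ⟨0, by omega⟩), mul_self_pos.mpr h]
  have hpos0 : 0 ≤ (1/2) * ∑ j, (w j)^2 - ν + α ⟨0, by omega⟩ := by
    set u : Fin n → ℝ := fun j => if j = (⟨0, by omega⟩ : Fin n) then a
      else if j = (⟨1, hn⟩ : Fin n) then b else 0 with hu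
    have s1 : ∑ j, w j * u j = 0 := by
      rw [hu, sum_two _ _ hne a b w]
      linear_combination hperp
    have s2 : ∑ j, (u j)^2 = a^2 + b^2 := by
      have h : ∀ j ∈ univ, (u j)^2 = u j * u j := fun j _ => sq (u j)
      rw [Finset.sum_congr rfl h]
      rw [show (∑ j, u j * u j) = ∑ j, u j * (if j = (⟨0, by omega⟩ : Fin n) then a
        else if j = (⟨1, hn⟩ : Fin n) then b else 0) from rfl, sum_two _ _ hne a b u]
      simp [hu, hne.symm]
      ring
    have s3 : ∑ j, α j * (w j * u j) = 0 := by
      have h : ∀ j ∈ univ, α j * (w j * u j) = (α j * w j) * u j := fun j _ => by ring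
      rw [Finset.sum_congr rfl h, hu, sum_two _ _ hne a b (fun j => α j * w j)]
      linear_combination α ⟨0, by omega⟩ * hperp - (w ⟨1, hn⟩ * b) * h12
    have s5 : ∑ j, α j * (u j)^2 = α ⟨0, by omega⟩ * (a^2 + b^2) := by
      have h : ∀ j ∈ univ, α j * (u j)^2 = (α j * u j) * u j := fun j _ => by ring
      rw [Finset.sum_congr rfl h]
      rw [show (∑ j, (α j * u j) * u j) = ∑ j, (α j * u j) * (if j = (⟨0, by omega⟩ : Fin n) then a
        else if j = (⟨1, hn⟩ : Fin n) then b else 0) from rfl, sum_two _ _ hne a b (fun j => α j * u j)]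
      have hu0 : u ⟨0, by omega⟩ = a := by simp [hu]
      have hu1 : u ⟨1, hn⟩ = b := by simp [hu, hne.symm]
      rw [hu0, hu1]
      linear_combination - (b*b) * h12
    have s4 : ∑ j, ψ j * u j = 0 := by
      rw [hu, sum_two _ _ hne a b ψ]
      rw [hstat ⟨0, by omega⟩, hstat ⟨1, hn⟩]
      linear_combination ((1/2) * ∑ j, (w j)^2 - ν + α ⟨0, by omega⟩) * hperp
        - (w ⟨1, hn⟩ * b) * h12
    have hφ : ∀ t : ℝ, g (w + t • u)
        = (1/2) * ((1/2) * (∑ j, (w j)^2) + (1/2) * t^2 * (a^2+b^2) - ν)^2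
          + (1/2) * (∑ j, α j * (w j)^2) + (1/2) * t^2 * (α ⟨0, by omega⟩ * (a^2+b^2))
          - (∑ j, ψ j * w j) := by
      intro t
      rw [hgen u t, s1, s2, s3, s4, s5]
      ring
    have hc := aux_quartic (fun t : ℝ => g (w + t • u))
      ((1/2) * (a^2+b^2) * ((1/2) * ∑ j, (w j)^2 - ν + α ⟨0, by omega⟩))
      ((1/8) * (a^2+b^2)^2)
      (by intro t; rw [hφ t, hφ 0]; ring)
      (hline u)
    nlinarith [hc, hU]
  have hpos : ∀ i : Fin n, 0 ≤ (1/2) * ∑ j, (w j)^2 - ν + α i := by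
    intro i
    have hle : (⟨0, by omega⟩ : Fin n) ≤ i := by simp [Fin.le_def]
    have := hα hle
    linarith
  -- conclusion
  intro v
  have hPV : ∑ i, ψ i * v i
      = ((1/2) * ∑ j, (w j)^2 - ν) * (∑ i, w i * v i) + ∑ i, α i * (w i * v i) := by
    have h : ∀ i ∈ univ, ψ i * v i
        = ((1/2) * ∑ j, (w j)^2 - ν) * (w i * v i) + α i * (w i * v i) := by
      intro i _
      rw [hstat i]; ring
    rw [Finset.sum_congr rfl h, sum_lin]
  have hPW : ∑ i, ψ i * w i
      = ((1/2) * ∑ j, (w j)^2 - ν) * (∑ i, (w i)^2) + ∑ i, α i * (w i)^2 := by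
    have h : ∀ i ∈ univ, ψ i * w i
        = ((1/2) * ∑ j, (w j)^2 - ν) * ((w i)^2) + α i * (w i)^2 := by
      intro i _
      rw [hstat i]; ring
    rw [Finset.sum_congr rfl h, sum_lin]
  have hQnn : 0 ≤ ∑ i, ((1/2) * ∑ j, (w j)^2 - ν + α i) * (v i - w i)^2 :=
    Finset.sum_nonneg fun i _ => mul_nonneg (hpos i) (sq_nonneg _)
  have hQ := sum_quad ((1/2) * ∑ j, (w j)^2 - ν) α w v
  rw [hg v, hg w, hPV, hPW]
  exact final_ineq ν (∑ i, (w i)^2) (∑ i, (v i)^2) (∑ i, α i * (w i)^2)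
    (∑ i, α i * (v i)^2) (∑ i, α i * (w i * v i)) (∑ i, w i * v i) _ hQ hQnn
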